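/- arXiv:1509.05542 — 3 statements merged into one kernel-verified Lean document; each statement's English description precedes it below -/
import Mathlib

section
/- Let X and Y be topological spaces with countable dense subsets D_X ⊆ X and D_Y ⊆ Y, let Z be a topological space, and let f : X × Y → Z be separately continuous (i.e., for each x the map y ↦ f(x,y) is continuous, and for each y the map x ↦ f(x,y) is continuous). If the image f(X × Y) is a discrete subspace of Z, then f(X × Y) = f(D_X × D_Y); in particular f(X × Y) is countable. -/
theorem stmt0 {X Y Z : Type*} [TopologicalSpace X] [TopologicalSpace Y] [TopologicalSpace Z]
    (DX : Set X) (DY : Set Y) (hDXc : DX.Countable) (hDYc : DY.Countable)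
    (hDXd : Dense DX) (hDYd : Dense DY)
    (f : X × Y → Z)
    (hfx : ∀ x : X, Continuous fun y : Y => f (x, y))
    (hfy : ∀ y : Y, Continuous fun x : X => f (x, y))
    (hdisc : DiscreteTopology ↥(Set.range f)) :
    Set.range f = f '' (DX ×ˢ DY) ∧ (Set.range f).Countable := by
  have heq : Set.range f = f '' (DX ×ˢ DY) := by
    apply Set.Subset.antisymm
    · rintro z ⟨⟨x, y⟩, rfl⟩
      have hz : f (x, y) ∈ Set.range f := ⟨(x, y), rfl⟩
      have hopen : IsOpen {(⟨f (x, y), hz⟩ : Set.range f)} := isOpen_discrete _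
      rw [isOpen_induced_iff] at hopen
      obtain ⟨U, hU, hUeq⟩ := hopen
      have hmem : ∀ p : X × Y, f p ∈ U → f p = f (x, y) := by
        intro p hp
        have h1 : (⟨f p, ⟨p, rfl⟩⟩ : Set.range f) ∈ (Subtype.val ⁻¹' U) := hp
        rw [hUeq] at h1
        exact congrArg Subtype.val h1
      have hfxyU : f (x, y) ∈ U := by
        have : (⟨f (x, y), hz⟩ : Set.range f) ∈ (Subtype.val ⁻¹' U) := by
          rw [hUeq]; rfl
        exact this
      -- find y' ∈ DY
      have hyopen : IsOpen ((fun y' => f (x, y')) ⁻¹' U) := (hfx x).isOpen_preimage U hU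
      obtain ⟨y', hy'D, hy'U⟩ := hDYd.exists_mem_open hyopen ⟨y, hfxyU⟩
      have hfy' : f (x, y') = f (x, y) := hmem _ hy'U
      -- find x' ∈ DX
      have hxopen : IsOpen ((fun x' => f (x', y')) ⁻¹' U) := (hfy y').isOpen_preimage U hU
      have hxU : f (x, y') ∈ U := by rw [hfy']; exact hfxyU
      obtain ⟨x', hx'D, hx'U⟩ := hDXd.exists_mem_open hxopen ⟨x, hxU⟩
      exact ⟨(x', y'), ⟨hx'D, hy'D⟩, hmem _ hx'U⟩
    · rintro z ⟨p, _, rfl⟩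
      exact ⟨p, rfl⟩
  exact ⟨heq, heq ▸ (hDXc.prod hDYc).image f⟩
end

section
/- Let X, Y, Z be topological spaces and f : X × Y → Z separately continuous with discrete image. For an open set V ⊆ Y and z ∈ Z, the set {x ∈ X : f({x} × V) ⊆ {z}} equals {x ∈ X : f({x} × closure(V)) ⊆ {z}}. -/
theorem stmt2 {X Y Z : Type*} [TopologicalSpace X] [TopologicalSpace Y] [TopologicalSpace Z]
    (f : X × Y → Z)
    (hfx : ∀ x : X, Continuous fun y : Y => f (x, y))
    (hfy : ∀ y : Y, Continuous fun x : X => f (x, y))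
    (hdisc : DiscreteTopology ↥(Set.range f))
    (V : Set Y) (hV : IsOpen V) (z : Z) :
    {x : X | ∀ y ∈ V, f (x, y) = z} = {x : X | ∀ y ∈ closure V, f (x, y) = z} := by
  ext x
  simp only [Set.mem_setOf_eq]
  constructor
  · intro h
    rcases V.eq_empty_or_nonempty with rfl | ⟨y0, hy0⟩
    · simp
    · have hz : z ∈ Set.range f := ⟨(x, y0), h y0 hy0⟩
      set g : Y → Set.range f := fun y => ⟨f (x, y), ⟨(x, y), rfl⟩⟩ with hg
      have hgc : Continuous g := Continuous.subtype_mk (hfx x) _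
      have hS : IsClosed (g ⁻¹' {⟨z, hz⟩}) :=
        (isClosed_discrete _).preimage hgc
      have hVS : V ⊆ g ⁻¹' {⟨z, hz⟩} := by
        intro y hy
        simp only [Set.mem_preimage, Set.mem_singleton_iff, hg, Subtype.ext_iff]
        exact h y hy
      intro y hy
      have := hS.closure_subset_iff.mpr hVS hy
      simpa [hg, Subtype.ext_iff] using this
  · intro h y hy
    exact h y (subset_closure hy)
end

section
/- Let Z be a separately continuous image setting: if X and Y are separable topological spaces, Z a topological space, and f : X × Y → Z is separately continuous, then the image f(X × Y) is separable. -/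
theorem stmt3 {X Y Z : Type*} [TopologicalSpace X] [TopologicalSpace Y] [TopologicalSpace Z]
    [TopologicalSpace.SeparableSpace X] [TopologicalSpace.SeparableSpace Y]
    (f : X × Y → Z)
    (hfx : ∀ x : X, Continuous fun y : Y => f (x, y))
    (hfy : ∀ y : Y, Continuous fun x : X => f (x, y)) :
    TopologicalSpace.IsSeparable (Set.range f) := by
  obtain ⟨u, hu_cnt, hu_dense⟩ := TopologicalSpace.exists_countable_dense X
  obtain ⟨v, hv_cnt, hv_dense⟩ := TopologicalSpace.exists_countable_dense Y
  refine ⟨f '' (u ×ˢ v), (hu_cnt.prod hv_cnt).image f, ?_⟩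
  rintro z ⟨⟨x, y⟩, rfl⟩
  have h1 : f (x, y) ∈ closure ((fun d => f (d, y)) '' u) :=
    image_closure_subset_closure_image (hfy y) ⟨x, hu_dense x, rfl⟩
  have h2 : (fun d => f (d, y)) '' u ⊆ closure (f '' (u ×ˢ v)) := by
    rintro _ ⟨d, hd, rfl⟩
    have hmem : f (d, y) ∈ closure ((fun e => f (d, e)) '' v) :=
      image_closure_subset_closure_image (hfx d) ⟨y, hv_dense y, rfl⟩
    refine closure_mono ?_ hmem
    rintro _ ⟨e, he, rfl⟩
    exact ⟨(d, e), ⟨hd, he⟩, rfl⟩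
  exact closure_minimal h2 isClosed_closure h1
end
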